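/- There are no integers x, y, z with 16*x^2 + 9*y^2 - 3*z^2 = 1, yet this equation has solutions in the real numbers and in Z_p for every prime p. -/

import Mathlib

lemma aux_sq2 : ¬ IsSquare (2 : ZMod 3) := by decide
lemma aux_sq1 : IsSquare (1 : ZMod 3) := ⟨1, by norm_num⟩

-- 3 is not a square mod p when p ≡ 5 or 7 (mod 12)
lemma three_not_sq (p : ℕ) (pp : p.Prime) (h : p % 12 = 5 ∨ p % 12 = 7) :
    ¬ IsSquare (3 : ZMod p) := by
  haveI : Fact p.Prime := ⟨pp⟩
  haveI : Fact (Nat.Prime 3) := ⟨by norm_num⟩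
  have h4 : p % 4 = p % 12 % 4 := (Nat.mod_mod_of_dvd p (by norm_num)).symm
  have h3 : p % 3 = p % 12 % 3 := (Nat.mod_mod_of_dvd p (by norm_num)).symm
  have hcast : ((3 : ℕ) : ZMod p) = (3 : ZMod p) := by push_cast; ring
  rcases h with h | h
  · have hp4 : p % 4 = 1 := by omega
    rw [← hcast, ZMod.exists_sq_eq_prime_iff_of_mod_four_eq_one hp4 (by norm_num)]
    have : (p : ZMod 3) = 2 := by
      have : ((p % 3 : ℕ) : ZMod 3) = (p : ZMod 3) := ZMod.natCast_mod p 3 ▸ rfl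
      rw [← this]; have : p % 3 = 2 := by omega
      rw [this]; rfl
    rw [this]; exact aux_sq2
  · have hp4 : p % 4 = 3 := by omega
    have hne : p ≠ 3 := by omega
    rw [← hcast, ZMod.exists_sq_eq_prime_iff_of_mod_four_eq_three hp4 (by norm_num) hne,
      not_not]
    have : (p : ZMod 3) = 1 := by
      have h1 : ((p % 3 : ℕ) : ZMod 3) = (p : ZMod 3) := ZMod.natCast_mod p 3 ▸ rfl
      rw [← h1]; have : p % 3 = 1 := by omega
      rw [this]; rfl
    rw [this]; exact aux_sq1

lemma lemL (p : ℕ) (pp : p.Prime) (h12 : p % 12 = 5 ∨ p % 12 = 7) (y z : ℤ)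
    (hdvd : (p : ℤ) ∣ z ^ 2 - 3 * y ^ 2) : (p : ℤ) ∣ z ∧ (p : ℤ) ∣ y := by
  haveI : Fact p.Prime := ⟨pp⟩
  have hz : ((z : ZMod p)) ^ 2 = 3 * (y : ZMod p) ^ 2 := by
    have h0 : ((z ^ 2 - 3 * y ^ 2 : ℤ) : ZMod p) = 0 :=
      (ZMod.intCast_zmod_eq_zero_iff_dvd _ _).mpr hdvd
    push_cast at h0
    linear_combination h0
  have hy : (y : ZMod p) = 0 := by
    by_contra hy0
    apply three_not_sq p pp h12
    refine ⟨(z : ZMod p) * ((y : ZMod p))⁻¹, ?_⟩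
    field_simp
    linear_combination -hz
  have hz0 : (z : ZMod p) = 0 := by
    rw [hy] at hz
    have := pow_eq_zero_iff (n := 2) (by norm_num) |>.mp (by rw [hz]; ring)
    exact this
  exact ⟨(ZMod.intCast_zmod_eq_zero_iff_dvd _ _).mp hz0,
    (ZMod.intCast_zmod_eq_zero_iff_dvd _ _).mp hy⟩

lemma keyM : ∀ n : ℕ, ∀ b c y z : ℤ, b.natAbs = n → b ≠ 0 →
    ¬ (2:ℤ) ∣ b → ¬ (3:ℤ) ∣ b →
    (∀ q : ℕ, q.Prime → (q % 12 = 5 ∨ q % 12 = 7) → (q:ℤ) ∣ b → ¬ (q:ℤ) ∣ c) →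
    b * c = z ^ 2 - 3 * y ^ 2 →
    ((b : ZMod 12) = 1 ∨ (b : ZMod 12) = 11) := by
  intro n
  induction n using Nat.strong_induction_on with
  | _ n ih =>
    intro b c y z hn hb0 h2 h3 H heq
    rcases eq_or_ne n 1 with h1 | h1
    · -- b = ±1
      have : b = 1 ∨ b = -1 := Int.natAbs_eq_iff.mp (by rw [hn, h1]) |>.imp
        (by norm_num) (by norm_num)
      rcases this with rfl | rfl
      · left; norm_num
      · right; decide
    have hn1 : 1 < n := by
      rcases Nat.lt_or_ge n 2 with h | h
      · interval_cases n
        · exact absurd (Int.natAbs_eq_zero.mp hn) hb0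
        · exact absurd rfl h1
      · exact h
    set p := n.minFac with hp
    have pp : p.Prime := Nat.minFac_prime (by omega)
    have hpdvdn : p ∣ n := Nat.minFac_dvd n
    have hpb : (p : ℤ) ∣ b := by
      have : (p : ℤ) ∣ (b.natAbs : ℤ) := Int.natCast_dvd_natCast.mpr (hn ▸ hpdvdn)
      exact this.trans (Int.natAbs_dvd.mpr dvd_rfl)
    have hp2 : p ≠ 2 := by
      intro h; rw [h] at hpb; exact h2 (by exact_mod_cast hpb)
    have hp3 : p ≠ 3 := by
      intro h; rw [h] at hpb; exact h3 (by exact_mod_cast hpb)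
    have hpodd : p % 2 = 1 := by
      rcases Nat.Prime.eq_two_or_odd pp with h | h
      · exact absurd h hp2
      · exact h
    have hpm3 : p % 3 ≠ 0 := by
      intro h
      exact hp3 ((Nat.prime_dvd_prime_iff_eq (by norm_num) pp).mp (Nat.dvd_of_mod_eq_zero h)).symm
    have hmod2 : p % 12 % 2 = p % 2 := by omega
    have hmod3 : p % 12 % 3 = p % 3 := by
      have := Nat.mod_mod_of_dvd p (show 3 ∣ 12 by norm_num); omega
    have hcases : p % 12 = 1 ∨ p % 12 = 5 ∨ p % 12 = 7 ∨ p % 12 = 11 := by omega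
    have hppInt : Prime (p : ℤ) := Nat.prime_iff_prime_int.mp pp
    have hmul12 : ∀ u v : ZMod 12, (u = 1 ∨ u = 11) → (v = 1 ∨ v = 11) →
        (u * v = 1 ∨ u * v = 11) := by decide
    have hpcast : ((p : ℤ) : ZMod 12) = ((p % 12 : ℕ) : ZMod 12) := by
      push_cast
      exact (ZMod.natCast_mod p 12).symm
    have hA : p % 12 = 1 ∨ p % 12 = 11 → ((b : ZMod 12) = 1 ∨ (b : ZMod 12) = 11) := by
      intro hc
      obtain ⟨b', rfl⟩ := hpb
      have hb'0 : b' ≠ 0 := by rintro rfl; exact hb0 (by ring)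
      have hnn : n = p * b'.natAbs := by
        rw [← hn, Int.natAbs_mul, Int.natAbs_natCast]
      have hlt : b'.natAbs < n := by
        have h1 : b'.natAbs ≠ 0 := fun h => hb'0 (Int.natAbs_eq_zero.mp h)
        have := pp.two_le
        have : b'.natAbs < p * b'.natAbs := by
          have h0 : 0 < b'.natAbs := by omega
          calc b'.natAbs = 1 * b'.natAbs := (one_mul _).symm
            _ < p * b'.natAbs := by exact (Nat.mul_lt_mul_right h0).mpr (by omega)
        omega
      have hres := ih b'.natAbs hlt b' ((p:ℤ) * c) y z rfl hb'0
        (fun h => h2 (h.mul_left _)) (fun h => h3 (h.mul_left _))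
        (fun q qp hq hqb' hqc => by
          rcases (Nat.prime_iff_prime_int.mp qp).dvd_mul.mp hqc with hqp | hqc2
          · have : q = p := (Nat.prime_dvd_prime_iff_eq qp pp).mp
              (Int.natCast_dvd_natCast.mp hqp)
            omega
          · exact H q qp hq (hqb'.mul_left _) hqc2)
        (by rw [← heq]; ring)
      have hcast : ((((p:ℤ)) * b' : ℤ) : ZMod 12) = ((p:ℤ) : ZMod 12) * ((b' : ℤ) : ZMod 12) := by
        push_cast; ring
      rw [hcast, hpcast]
      apply hmul12
      · rcases hc with hc | hc <;> rw [hc]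
        · left; norm_num
        · right; norm_num
      · exact hres
    have hB : p % 12 = 5 ∨ p % 12 = 7 → ((b : ZMod 12) = 1 ∨ (b : ZMod 12) = 11) := by
      intro hc
      obtain ⟨hz, hy⟩ := lemL p pp hc y z (heq ▸ hpb.mul_right c)
      obtain ⟨z₁, rfl⟩ := hz
      obtain ⟨y₁, rfl⟩ := hy
      have hpc : ¬ (p:ℤ) ∣ c := H p pp hc hpb
      have hsq : ((p:ℤ))^2 ∣ b * c := by
        rw [heq]; exact ⟨z₁^2 - 3*y₁^2, by ring⟩
      have hp2b : ((p:ℤ))^2 ∣ b := hppInt.pow_dvd_of_dvd_mul_right 2 hpc hsq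
      obtain ⟨b', rfl⟩ := hp2b
      have hpne : ((p:ℤ))^2 ≠ 0 := pow_ne_zero _ (by exact_mod_cast pp.ne_zero)
      have hb'0 : b' ≠ 0 := by rintro rfl; exact hb0 (by ring)
      have heq' : b' * c = z₁^2 - 3*y₁^2 := by
        apply mul_left_cancel₀ hpne
        rw [← mul_assoc, heq]; ring
      have hnn : n = p^2 * b'.natAbs := by
        rw [← hn, Int.natAbs_mul, Int.natAbs_pow, Int.natAbs_natCast]
      have hlt : b'.natAbs < n := by
        have h1 : b'.natAbs ≠ 0 := fun h => hb'0 (Int.natAbs_eq_zero.mp h)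
        have h2 := pp.two_le
        have : 4 ≤ p^2 := by nlinarith
        have : b'.natAbs < p^2 * b'.natAbs := by
          have h0 : 0 < b'.natAbs := by omega
          calc b'.natAbs = 1 * b'.natAbs := (one_mul _).symm
            _ < p^2 * b'.natAbs := by exact (Nat.mul_lt_mul_right h0).mpr (by omega)
        omega
      have hres := ih b'.natAbs hlt b' c y₁ z₁ rfl hb'0
        (fun h => h2 (h.mul_left _)) (fun h => h3 (h.mul_left _))
        (fun q qp hq hqb' hqc => H q qp hq (hqb'.mul_left _) hqc)
        heq'
      have hcast : (((((p:ℤ))^2) * b' : ℤ) : ZMod 12) = (((p:ℤ) : ZMod 12))^2 * ((b' : ℤ) : ZMod 12) := by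
        push_cast; ring
      have hsq1 : (((p:ℤ) : ZMod 12))^2 = 1 := by
        rw [hpcast]
        rcases hc with hc | hc <;> rw [hc] <;> decide
      rw [hcast, hsq1, one_mul]
      exact hres
    rcases hcases with hc | hc | hc | hc
    · exact hA (Or.inl hc)
    · exact hB (Or.inl hc)
    · exact hB (Or.inr hc)
    · exact hA (Or.inr hc)

lemma padic_unit_of_not_dvd (p : ℕ) [Fact p.Prime] (k : ℤ) (h : ¬ (p:ℤ) ∣ k) :
    IsUnit ((k : ℤ_[p])) := by
  rw [PadicInt.isUnit_iff]
  refine le_antisymm (PadicInt.norm_le_one _) ?_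
  by_contra hlt
  push_neg at hlt
  exact h ((PadicInt.norm_int_lt_one_iff_dvd k).mp hlt)

lemma descent (x y z b t : ℤ) (hb : b = 4*x+1 ∨ b = 4*x-1)
    (ht : b = 4*x+1 → 4*x-1 = 3*t) (ht' : b = 4*x-1 → 4*x+1 = 3*t)
    (heq : b * t = z^2 - 3*y^2) :
    (b : ZMod 12) = 1 ∨ (b : ZMod 12) = 11 := by
  apply keyM b.natAbs b t y z rfl
  · rcases hb with rfl | rfl
    · have := ht rfl; omega
    · have := ht' rfl; omega
  · rcases hb with rfl | rfl <;> omega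
  · rcases hb with rfl | rfl
    · have := ht rfl; omega
    · have := ht' rfl; omega
  · intro q qp hq hqb hqc
    have hother : (q:ℤ) ∣ 2 := by
      rcases hb with rfl | rfl
      · have h1 : (q:ℤ) ∣ 4*x-1 := (ht rfl) ▸ (hqc.mul_left 3)
        have h2 := dvd_sub hqb h1; rw [show 4*x+1-(4*x-1) = (2:ℤ) by ring] at h2; exact h2
      · have h1 : (q:ℤ) ∣ 4*x+1 := (ht' rfl) ▸ (hqc.mul_left 3)
        have h2 := dvd_sub h1 hqb; rw [show 4*x+1-(4*x-1) = (2:ℤ) by ring] at h2; exact h2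
    have hq2 : q ∣ 2 := by exact_mod_cast hother
    have := Nat.le_of_dvd (by norm_num) hq2
    omega
  · exact heq

theorem stmt_15 :
    (¬∃ x y z : ℤ, 16 * x ^ 2 + 9 * y ^ 2 - 3 * z ^ 2 = 1) ∧
    (∃ x y z : ℝ, 16 * x ^ 2 + 9 * y ^ 2 - 3 * z ^ 2 = 1) ∧
    (∀ (p : ℕ) [Fact p.Prime], ∃ x y z : ℤ_[p], 16 * x ^ 2 + 9 * y ^ 2 - 3 * z ^ 2 = 1) := by
  refine ⟨?_, ⟨1/4, 0, 0, by norm_num⟩, ?_⟩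
  · rintro ⟨x, y, z, hxyz⟩
    have h3m : 3 * (z^2 - 3*y^2) = (4*x - 1) * (4*x + 1) := by linear_combination -hxyz
    have hd : (3:ℤ) ∣ (4*x-1)*(4*x+1) := ⟨_, h3m.symm⟩
    rcases (Int.prime_three.dvd_mul).mp hd with h | h
    · obtain ⟨t, htt⟩ := h
      have heq : (4*x+1) * t = z^2 - 3*y^2 := by
        apply mul_left_cancel₀ (show (3:ℤ) ≠ 0 by norm_num)
        linear_combination (-(4*x+1)) * htt - h3m
      have hres := descent x y z (4*x+1) t (Or.inl rfl) (fun _ => htt) (by omega) heq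
      have hmod : ((4*x+1 : ℤ) : ZMod 12) = ((5 : ℤ) : ZMod 12) := by
        rw [ZMod.intCast_eq_intCast_iff]
        show (4*x+1) % 12 = 5 % 12
        omega
      rw [hmod] at hres
      rcases hres with h' | h' <;> revert h' <;> decide
    · obtain ⟨t, htt⟩ := h
      have heq : (4*x-1) * t = z^2 - 3*y^2 := by
        apply mul_left_cancel₀ (show (3:ℤ) ≠ 0 by norm_num)
        linear_combination (-(4*x-1)) * htt - h3m
      have hres := descent x y z (4*x-1) t (Or.inr rfl) (by omega) (fun _ => htt) heq
      have hmod : ((4*x-1 : ℤ) : ZMod 12) = ((7 : ℤ) : ZMod 12) := by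
        rw [ZMod.intCast_eq_intCast_iff]
        show (4*x-1) % 12 = 7 % 12
        omega
      rw [hmod] at hres
      rcases hres with h' | h' <;> revert h' <;> decide
  · intro p hp
    by_cases hp3 : p = 3
    · subst hp3
      obtain ⟨u, hu⟩ := padic_unit_of_not_dvd 3 4 (by norm_num)
      refine ⟨((u⁻¹ : ℤ_[3]ˣ) : ℤ_[3]), 0, 0, ?_⟩
      have h4 : ((4 : ℤ) : ℤ_[3]) * ((u⁻¹ : ℤ_[3]ˣ) : ℤ_[3]) = 1 := by
        rw [← hu, ← Units.val_mul, mul_inv_cancel, Units.val_one]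
      push_cast at h4
      linear_combination (4 * ((u⁻¹ : ℤ_[3]ˣ) : ℤ_[3]) + 1) * h4
    · obtain ⟨u, hu⟩ := padic_unit_of_not_dvd p 3 (by
        intro hdvd
        have : p ∣ 3 := by exact_mod_cast hdvd
        have := (Nat.prime_dvd_prime_iff_eq hp.out (by norm_num)).mp this
        exact hp3 this)
      refine ⟨0, ((u⁻¹ : ℤ_[p]ˣ) : ℤ_[p]), 0, ?_⟩
      have h3 : ((3 : ℤ) : ℤ_[p]) * ((u⁻¹ : ℤ_[p]ˣ) : ℤ_[p]) = 1 := by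
        rw [← hu, ← Units.val_mul, mul_inv_cancel, Units.val_one]
      push_cast at h3
      linear_combination (3 * ((u⁻¹ : ℤ_[p]ˣ) : ℤ_[p]) + 1) * h3
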